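/- Let Ω ⊆ ℝ² be open, x ∈ Ω, and y : Ω → ℝ³ of class C² on a neighborhood of x with ∂₁y(x) and ∂₂y(x) linearly independent. Define ν := (∂₁y(x) × ∂₂y(x)) / ‖∂₁y(x) × ∂₂y(x)‖ ∈ ℝ³, II ∈ ℝ^{2×2} with II_{ij} := ⟨∂_i∂_j y(x), ν⟩, and D²y_k ∈ ℝ^{2×2} the Hessian of the k-th component of y at x (k = 1, 2, 3). Then for every matrix a ∈ ℝ^{2×2}: (tr(a · II · a))² ≤ Σ_{k=1}^{3} (tr(a · D²y_k · a))², where tr denotes the matrix trace. -/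

import Mathlib

open Matrix

/-- The square of the Frobenius norm of a real matrix. -/
noncomputable def frobNormSq {m n : Type*} [Fintype m] [Fintype n]
    (A : Matrix m n ℝ) : ℝ :=
  ∑ i, ∑ j, (A i j) ^ 2

/-- First partial derivative `∂ᵢ y (x)` of a map `y : ℝ² → ℝ³`. -/
noncomputable def pd (y : (Fin 2 → ℝ) → (Fin 3 → ℝ)) (i : Fin 2) (x : Fin 2 → ℝ) :
    Fin 3 → ℝ :=
  fderiv ℝ y x (Pi.single i 1)

/-- Second partial derivative `∂ᵢ∂ⱼ y (x)` of a map `y : ℝ² → ℝ³`. -/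
noncomputable def pd2 (y : (Fin 2 → ℝ) → (Fin 3 → ℝ)) (i j : Fin 2) (x : Fin 2 → ℝ) :
    Fin 3 → ℝ :=
  fderiv ℝ (fun z => fderiv ℝ y z (Pi.single j 1)) x (Pi.single i 1)

/-- Second partial derivative `∂ᵢ∂ⱼ y_k (x)` of the `k`-th component of `y : ℝ² → ℝ³`. -/
noncomputable def pd2c (y : (Fin 2 → ℝ) → (Fin 3 → ℝ)) (k : Fin 3) (i j : Fin 2)
    (x : Fin 2 → ℝ) : ℝ :=
  fderiv ℝ (fun z => fderiv ℝ (fun w => y w k) z (Pi.single j 1)) x (Pi.single i 1)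

/-- Pointwise content of Proposition A.1, part (A.2): with `II` the second fundamental
form and `D²y_k` the Hessians of the components of a C² immersion `y` at `x`, one has
`(tr(a II a))² ≤ Σ_k (tr(a D²y_k a))²` for every `2 × 2` matrix `a`. -/
lemma pd2_eq_pd2c (y : (Fin 2 → ℝ) → (Fin 3 → ℝ)) (x : Fin 2 → ℝ)
    (U : Set (Fin 2 → ℝ)) (hU : U ∈ nhds x) (hC2 : ContDiffOn ℝ 2 y U)
    (k : Fin 3) (i j : Fin 2) : pd2 y i j x k = pd2c y k i j x := by
  obtain ⟨V, hVU, hVo, hxV⟩ := mem_nhds_iff.mp hU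
  have hC2V : ContDiffOn ℝ 2 y V := hC2.mono hVU
  have hVx : V ∈ nhds x := hVo.mem_nhds hxV
  have hCAx : ContDiffAt ℝ 2 y x := hC2V.contDiffAt hVx
  have hF : DifferentiableAt ℝ (fun z => fderiv ℝ y z (Pi.single j 1)) x := by
    have h1 : ContDiffAt ℝ 1 (fderiv ℝ y) x := hCAx.fderiv_right (by norm_num)
    exact (h1.differentiableAt one_ne_zero).clm_apply (differentiableAt_const _)
  have hEq : (fun z => fderiv ℝ (fun w => y w k) z (Pi.single j 1)) =ᶠ[nhds x]
      (fun z => fderiv ℝ y z (Pi.single j 1) k) := by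
    filter_upwards [hVx] with z hz
    have hd : DifferentiableAt ℝ y z :=
      ((hC2V.contDiffAt (hVo.mem_nhds hz)).differentiableAt (by norm_num))
    have := ((ContinuousLinearMap.proj (R := ℝ) (φ := fun _ : Fin 3 => ℝ) k).hasFDerivAt.comp
      z hd.hasFDerivAt).fderiv
    simp only [Function.comp_def] at this
    rw [show (fun w => y w k) = (fun w => (ContinuousLinearMap.proj (R := ℝ)
      (φ := fun _ : Fin 3 => ℝ) k) (y w)) from rfl, this]
    rfl
  have key : fderiv ℝ (fun z => fderiv ℝ (fun w => y w k) z (Pi.single j 1)) x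
      = fderiv ℝ (fun z => fderiv ℝ y z (Pi.single j 1) k) x := hEq.fderiv_eq
  have hcomp := ((ContinuousLinearMap.proj (R := ℝ) (φ := fun _ : Fin 3 => ℝ) k).hasFDerivAt.comp
      x hF.hasFDerivAt).fderiv
  simp only [Function.comp_def] at hcomp
  unfold pd2 pd2c
  rw [key]
  rw [show (fun z => fderiv ℝ y z (Pi.single j 1) k) = (fun z => (ContinuousLinearMap.proj (R := ℝ)
      (φ := fun _ : Fin 3 => ℝ) k) (fderiv ℝ y z (Pi.single j 1))) from rfl, hcomp]
  rfl

theorem stmt_13 (Ω : Set (Fin 2 → ℝ)) (hΩ : IsOpen Ω) (x : Fin 2 → ℝ) (hx : x ∈ Ω)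
    (y : (Fin 2 → ℝ) → (Fin 3 → ℝ))
    (hy : ∃ U, U ⊆ Ω ∧ U ∈ nhds x ∧ ContDiffOn ℝ 2 y U)
    (hli : LinearIndependent ℝ ![pd y 0 x, pd y 1 x])
    (ν : Fin 3 → ℝ)
    (hν : ν = (Real.sqrt (∑ k, (crossProduct (pd y 0 x) (pd y 1 x)) k ^ 2))⁻¹ •
      crossProduct (pd y 0 x) (pd y 1 x))
    (II : Matrix (Fin 2) (Fin 2) ℝ)
    (hII : ∀ i j, II i j = ∑ k, pd2 y i j x k * ν k)
    (D2 : Fin 3 → Matrix (Fin 2) (Fin 2) ℝ)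
    (hD2 : ∀ k i j, D2 k i j = pd2c y k i j x)
    (a : Matrix (Fin 2) (Fin 2) ℝ) :
    (Matrix.trace (a * II * a)) ^ 2 ≤ ∑ k, (Matrix.trace (a * D2 k * a)) ^ 2 := by
  obtain ⟨U, hUΩ, hUx, hC2⟩ := hy
  -- II as a linear combination of the Hessians
  have hIIsum : II = ∑ k, ν k • D2 k := by
    ext i j
    simp only [Finset.sum_apply, Matrix.sum_apply, Matrix.smul_apply, smul_eq_mul,
      hII, hD2]
    refine Finset.sum_congr rfl fun k _ => ?_
    rw [pd2_eq_pd2c y x U hUx hC2, mul_comm]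
  have htrace : Matrix.trace (a * II * a) = ∑ k, ν k * Matrix.trace (a * D2 k * a) := by
    rw [hIIsum]
    simp [Matrix.mul_sum, Matrix.sum_mul, Matrix.mul_smul, Matrix.smul_mul,
      Matrix.trace_sum, Matrix.trace_smul, smul_eq_mul]
  -- norm bound on ν
  have hν2 : ∑ k, ν k ^ 2 ≤ 1 := by
    set w := crossProduct (pd y 0 x) (pd y 1 x) with hw
    set S := ∑ k, w k ^ 2 with hS
    have hS0 : 0 ≤ S := Finset.sum_nonneg fun k _ => sq_nonneg _
    have : ∑ k, ν k ^ 2 = (Real.sqrt S)⁻¹ ^ 2 * S := by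
      rw [hν]
      simp only [Pi.smul_apply, smul_eq_mul, mul_pow, ← Finset.mul_sum]
      rfl
    rw [this]
    rcases eq_or_lt_of_le hS0 with h | h
    · simp [← h]
    · rw [inv_pow, Real.sq_sqrt hS0, inv_mul_cancel₀ (ne_of_gt h)]
  -- Cauchy–Schwarz
  rw [htrace]
  calc (∑ k, ν k * Matrix.trace (a * D2 k * a)) ^ 2
      ≤ (∑ k, ν k ^ 2) * ∑ k, Matrix.trace (a * D2 k * a) ^ 2 :=
        Finset.sum_mul_sq_le_sq_mul_sq Finset.univ _ _
    _ ≤ ∑ k, Matrix.trace (a * D2 k * a) ^ 2 := by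
        have h2 : 0 ≤ ∑ k, Matrix.trace (a * D2 k * a) ^ 2 :=
          Finset.sum_nonneg fun k _ => sq_nonneg _
        nlinarith [hν2, h2]
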